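/- Let X be a finite abstract simplicial complex and σ ∈ X a k-simplex (|σ| = k+1). Then for every n ≥ k+1, the dimension over ℤ/2 of H_n(C_•^σ) equals the dimension over ℤ/2 of the reduced homology H̃_{n−k−1} of the link lk(σ) (i.e. the local homology of σ in degree n is isomorphic to the reduced homology of the link in degree n−k−1). -/
import Mathlib


open Finset

variable {V : Type*} [DecidableEq V]

/-- An abstract simplicial complex: a finite set of finite nonempty subsets of `V`,
closed under passing to nonempty subsets. -/
def IsSimplicialComplex (X : Finset (Finset V)) : Prop :=
  (∀ τ ∈ X, τ.Nonempty) ∧ ∀ τ ∈ X, ∀ ρ ⊆ τ, ρ.Nonempty → ρ ∈ X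

/-- `Sn X σ n` is the set of `n`-simplices of `X` containing `σ`. -/
def Sn (X : Finset (Finset V)) (σ : Finset V) (n : ℕ) : Finset (Finset V) :=
  X.filter fun τ => σ ⊆ τ ∧ τ.card = n + 1

/-- The boundary map `∂_{n+1} : C_{n+1}^σ → C_n^σ` of the local chain complex of `σ`
over `ℤ/2`, sending a basis element `τ` to `∑_{v ∈ τ \ σ} (τ \ {v})`. -/
noncomputable def localBoundary (X : Finset (Finset V)) (σ : Finset V) (n : ℕ) :
    (↥(Sn X σ (n + 1)) → ZMod 2) →ₗ[ZMod 2] (↥(Sn X σ n) → ZMod 2) where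
  toFun f ρ := ∑ τ : ↥(Sn X σ (n + 1)),
    (((τ.1 \ σ).filter fun v => τ.1.erase v = ρ.1).card : ZMod 2) * f τ
  map_add' f g := by
    funext ρ
    simp only [Pi.add_apply, mul_add]
    exact Finset.sum_add_distrib
  map_smul' c f := by
    funext ρ
    simp only [Pi.smul_apply, smul_eq_mul, RingHom.id_apply]
    rw [Finset.mul_sum]
    exact Finset.sum_congr rfl fun τ _ => mul_left_comm _ _ _

/-- The cycles `ker ∂_n` of the local chain complex (`∂_0 = 0`, so all of `C_0` in degree 0). -/
noncomputable def localCycles (X : Finset (Finset V)) (σ : Finset V) :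
    (n : ℕ) → Submodule (ZMod 2) (↥(Sn X σ n) → ZMod 2)
  | 0 => ⊤
  | n + 1 => LinearMap.ker (localBoundary X σ n)

/-- The local homology `H_n(C_•^σ) = ker ∂_n / im ∂_{n+1}` over `ℤ/2`. -/
noncomputable abbrev LocalHomology (X : Finset (Finset V)) (σ : Finset V) (n : ℕ) :=
  ↥(localCycles X σ n) ⧸
    (LinearMap.range (localBoundary X σ n)).comap (localCycles X σ n).subtype

/-- The dimension of `H_n(C_•^σ)` over `ℤ/2`. -/
noncomputable def localHomologyDim (X : Finset (Finset V)) (σ : Finset V) (n : ℕ) : ℕ :=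
  Module.finrank (ZMod 2) (LocalHomology X σ n)

/-- The `n`-simplices of a finite abstract simplicial complex `L`
(the members with `n + 1` elements). -/
def simplicesOf (L : Finset (Finset V)) (n : ℕ) : Finset (Finset V) :=
  L.filter fun τ => τ.card = n + 1

/-- The boundary map `∂_{n+1} : C̃_{n+1}(L) → C̃_n(L)` of the reduced chain complex of `L`
over `ℤ/2`, sending a basis element `τ` to `∑_{v ∈ τ} (τ \ {v})`. -/
noncomputable def reducedBoundary (L : Finset (Finset V)) (n : ℕ) :
    (↥(simplicesOf L (n + 1)) → ZMod 2) →ₗ[ZMod 2] (↥(simplicesOf L n) → ZMod 2) where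
  toFun f ρ := ∑ τ : ↥(simplicesOf L (n + 1)),
    ((τ.1.filter fun v => τ.1.erase v = ρ.1).card : ZMod 2) * f τ
  map_add' f g := by
    funext ρ
    simp only [Pi.add_apply, mul_add]
    exact Finset.sum_add_distrib
  map_smul' c f := by
    funext ρ
    simp only [Pi.smul_apply, smul_eq_mul, RingHom.id_apply]
    rw [Finset.mul_sum]
    exact Finset.sum_congr rfl fun τ _ => mul_left_comm _ _ _

/-- The augmentation `∂_0 : C̃_0(L) → C̃_{-1}(L) = ℤ/2`, sending each vertex to `1`. -/
noncomputable def augmentation (L : Finset (Finset V)) :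
    (↥(simplicesOf L 0) → ZMod 2) →ₗ[ZMod 2] ZMod 2 where
  toFun f := ∑ τ : ↥(simplicesOf L 0), f τ
  map_add' f g := by simp [Finset.sum_add_distrib]
  map_smul' c f := by simp [Finset.mul_sum]

/-- The reduced cycles `ker ∂_n` of the reduced chain complex of `L` over `ℤ/2`. -/
noncomputable def reducedCycles (L : Finset (Finset V)) :
    (n : ℕ) → Submodule (ZMod 2) (↥(simplicesOf L n) → ZMod 2)
  | 0 => LinearMap.ker (augmentation L)
  | n + 1 => LinearMap.ker (reducedBoundary L n)

/-- The reduced homology `H̃_n(L) = ker ∂_n / im ∂_{n+1}` over `ℤ/2`. -/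
noncomputable abbrev ReducedHomology (L : Finset (Finset V)) (n : ℕ) :=
  ↥(reducedCycles L n) ⧸
    (LinearMap.range (reducedBoundary L n)).comap (reducedCycles L n).subtype

/-- The dimension of `H̃_n(L)` over `ℤ/2`. -/
noncomputable def reducedHomologyDim (L : Finset (Finset V)) (n : ℕ) : ℕ :=
  Module.finrank (ZMod 2) (ReducedHomology L n)

/-- The link of `σ` in `X`: `lk(σ) = {ρ ∈ X : ρ ∩ σ = ∅ and ρ ∪ σ ∈ X}`. -/
def link (X : Finset (Finset V)) (σ : Finset V) : Finset (Finset V) :=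
  X.filter fun ρ => ρ ∩ σ = ∅ ∧ ρ ∪ σ ∈ X


section AuxAbstract

open LinearMap Submodule

variable {R : Type*} [Field R] {A B C A' B' C' : Type*}
  [AddCommGroup A] [Module R A] [AddCommGroup B] [Module R B]
  [AddCommGroup C] [Module R C] [AddCommGroup A'] [Module R A']
  [AddCommGroup B'] [Module R B'] [AddCommGroup C'] [Module R C']

lemma aux_finrank_comap_subtype (p K : Submodule R B) :
    Module.finrank R (p.comap K.subtype) = Module.finrank R ↥(p ⊓ K) := by
  have h1 : p.comap K.subtype = (p ⊓ K).comap K.subtype := by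
    rw [Submodule.comap_inf]
    simp [Submodule.comap_subtype_self]
  rw [h1]
  exact (Submodule.comapSubtypeEquivOfLe inf_le_right).finrank_eq

lemma aux_homology_dim_eq [FiniteDimensional R B] [FiniteDimensional R B']
    (f₁ : A →ₗ[R] B) (f₂ : B →ₗ[R] C) (g₁ : A' →ₗ[R] B') (g₂ : B' →ₗ[R] C')
    (eA : A ≃ₗ[R] A') (eB : B ≃ₗ[R] B') (eC : C ≃ₗ[R] C')
    (h₁ : ∀ a, eB (f₁ a) = g₁ (eA a)) (h₂ : ∀ b, eC (f₂ b) = g₂ (eB b)) :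
    Module.finrank R
        (↥(LinearMap.ker f₂) ⧸ (LinearMap.range f₁).comap (LinearMap.ker f₂).subtype)
      = Module.finrank R
        (↥(LinearMap.ker g₂) ⧸ (LinearMap.range g₁).comap (LinearMap.ker g₂).subtype) := by
  have hker : (LinearMap.ker f₂).map (eB : B →ₗ[R] B') = LinearMap.ker g₂ := by
    ext x'
    simp only [Submodule.mem_map, LinearMap.mem_ker]
    constructor
    · rintro ⟨x, hx, rfl⟩
      show g₂ (eB x) = 0
      rw [← h₂, hx, map_zero]
    · intro hx
      exact ⟨eB.symm x', by rw [← eC.map_eq_zero_iff, h₂, eB.apply_symm_apply]; exact hx,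
        eB.apply_symm_apply x'⟩
  have hrange : (LinearMap.range f₁).map (eB : B →ₗ[R] B') = LinearMap.range g₁ := by
    ext x'
    simp only [Submodule.mem_map, LinearMap.mem_range]
    constructor
    · rintro ⟨x, ⟨a, rfl⟩, rfl⟩
      exact ⟨eA a, (h₁ a).symm⟩
    · rintro ⟨a', rfl⟩
      exact ⟨f₁ (eA.symm a'), ⟨_, rfl⟩, by show eB _ = _; rw [h₁, eA.apply_symm_apply]⟩
  have hq1 := Submodule.finrank_quotient_add_finrank
    ((LinearMap.range f₁).comap (LinearMap.ker f₂).subtype)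
  have hq2 := Submodule.finrank_quotient_add_finrank
    ((LinearMap.range g₁).comap (LinearMap.ker g₂).subtype)
  rw [aux_finrank_comap_subtype] at hq1 hq2
  have hK : Module.finrank R ↥(LinearMap.ker f₂) = Module.finrank R ↥(LinearMap.ker g₂) := by
    rw [← hker]; exact (eB.submoduleMap _).finrank_eq
  have hI : Module.finrank R ↥(LinearMap.range f₁ ⊓ LinearMap.ker f₂)
      = Module.finrank R ↥(LinearMap.range g₁ ⊓ LinearMap.ker g₂) := by
    rw [← hker, ← hrange, ← Submodule.map_inf (eB : B →ₗ[R] B') eB.injective]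
    exact (eB.submoduleMap _).finrank_eq
  omega

end AuxAbstract

section AuxComb

variable (X : Finset (Finset V)) (σ : Finset V)

/-- The bijection `τ ↦ τ \ σ` between `(k+m+1)`-simplices of `X` containing `σ`
and `m`-simplices of the link of `σ`. -/
def snLinkEquiv (hX : IsSimplicialComplex X) (k : ℕ) (hk : σ.card = k + 1) (m : ℕ) :
    ↥(Sn X σ (k + m + 1)) ≃ ↥(simplicesOf (link X σ) m) where
  toFun τ := ⟨τ.1 \ σ, by
    obtain ⟨τ, hτ⟩ := τ
    rw [Sn, Finset.mem_filter] at hτ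
    obtain ⟨hτX, hστ, hcard⟩ := hτ
    have hcs : (τ \ σ).card = m + 1 := by
      have h1 : τ.card = k + m + 1 + 1 := hcard
      have h2 : σ.card = k + 1 := hk
      rw [Finset.card_sdiff_of_subset hστ]; omega
    rw [simplicesOf, Finset.mem_filter, link, Finset.mem_filter]
    refine ⟨⟨hX.2 τ hτX (τ \ σ) (Finset.sdiff_subset)
      (Finset.card_pos.mp (by rw [hcs]; omega)), ?_, ?_⟩, hcs⟩
    · exact Finset.sdiff_inter_self σ τ
    · rw [Finset.sdiff_union_of_subset hστ]; exact hτX⟩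
  invFun ρ := ⟨ρ.1 ∪ σ, by
    obtain ⟨ρ, hρ⟩ := ρ
    rw [simplicesOf, Finset.mem_filter, link, Finset.mem_filter] at hρ
    obtain ⟨⟨_, hdisj, hmem⟩, hcard⟩ := hρ
    rw [Sn, Finset.mem_filter]
    refine ⟨hmem, Finset.subset_union_right, ?_⟩
    rw [Finset.card_union_of_disjoint (Finset.disjoint_iff_inter_eq_empty.mpr hdisj),
      hcard, hk]
    omega⟩
  left_inv τ := by
    apply Subtype.ext
    obtain ⟨τ, hτ⟩ := τ
    rw [Sn, Finset.mem_filter] at hτ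
    exact Finset.sdiff_union_of_subset hτ.2.1
  right_inv ρ := by
    apply Subtype.ext
    obtain ⟨ρ, hρ⟩ := ρ
    rw [simplicesOf, Finset.mem_filter, link, Finset.mem_filter] at hρ
    exact Finset.union_sdiff_cancel_right
      (Finset.disjoint_iff_inter_eq_empty.mpr hρ.1.2.1)

lemma aux_erase_eq_union_iff {τ ρ : Finset V} {v : V} (hστ : σ ⊆ τ)
    (hdisj : ρ ∩ σ = ∅) (hv : v ∈ τ \ σ) :
    τ.erase v = ρ ∪ σ ↔ (τ \ σ).erase v = ρ := by
  obtain ⟨hvτ, hvσ⟩ := Finset.mem_sdiff.mp hv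
  have hdisj' : Disjoint ρ σ := Finset.disjoint_iff_inter_eq_empty.mpr hdisj
  have hkey : (τ \ σ).erase v = (τ.erase v) \ σ := by
    rw [Finset.erase_eq, Finset.erase_eq, _root_.sdiff_right_comm]
  constructor
  · intro h
    rw [hkey, h, Finset.union_sdiff_cancel_right hdisj']
  · intro h
    have hσe : σ ⊆ τ.erase v := Finset.subset_erase.mpr ⟨hστ, hvσ⟩
    rw [← Finset.sdiff_union_of_subset hσe, ← hkey, h]

lemma aux_Sn_self (hσ : σ ∈ X) (k : ℕ) (hk : σ.card = k + 1) : Sn X σ k = {σ} := by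
  ext τ
  rw [Sn, Finset.mem_filter, Finset.mem_singleton]
  constructor
  · rintro ⟨hτX, hστ, hcard⟩
    exact (Finset.eq_of_subset_of_card_le hστ (by omega)).symm
  · rintro rfl
    exact ⟨hσ, subset_rfl, hk⟩

/-- The linear equivalence of chain groups induced by `snLinkEquiv`. -/
noncomputable def linkChainEquiv (hX : IsSimplicialComplex X) (k : ℕ)
    (hk : σ.card = k + 1) (m : ℕ) :
    (↥(Sn X σ (k + m + 1)) → ZMod 2) ≃ₗ[ZMod 2] (↥(simplicesOf (link X σ) m) → ZMod 2) :=
  LinearEquiv.funCongrLeft (ZMod 2) (ZMod 2) (snLinkEquiv X σ hX k hk m).symm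

lemma linkChainEquiv_apply (hX : IsSimplicialComplex X) (k : ℕ) (hk : σ.card = k + 1)
    (m : ℕ) (f : ↥(Sn X σ (k + m + 1)) → ZMod 2) (ρ : ↥(simplicesOf (link X σ) m)) :
    linkChainEquiv X σ hX k hk m f ρ = f ((snLinkEquiv X σ hX k hk m).symm ρ) := rfl

/-- Compatibility of the boundary maps under `linkChainEquiv`. -/
lemma aux_square (hX : IsSimplicialComplex X) (k : ℕ) (hk : σ.card = k + 1) (m : ℕ)
    (f : ↥(Sn X σ (k + (m + 1) + 1)) → ZMod 2) :
    linkChainEquiv X σ hX k hk m (localBoundary X σ (k + m + 1) f)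
      = reducedBoundary (link X σ) m (linkChainEquiv X σ hX k hk (m + 1) f) := by
  funext ρ
  rw [linkChainEquiv_apply]
  show ∑ τ : ↥(Sn X σ (k + m + 1 + 1)),
      (((τ.1 \ σ).filter fun v =>
        τ.1.erase v = ((snLinkEquiv X σ hX k hk m).symm ρ).1).card : ZMod 2) * f τ
    = ∑ π : ↥(simplicesOf (link X σ) (m + 1)),
      ((π.1.filter fun v => π.1.erase v = ρ.1).card : ZMod 2) *
        (linkChainEquiv X σ hX k hk (m + 1) f) π
  refine Fintype.sum_equiv (snLinkEquiv X σ hX k hk (m + 1)) _ _ fun τ => ?_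
  rw [linkChainEquiv_apply, Equiv.symm_apply_apply]
  congr 2
  · refine congrArg Finset.card (Finset.filter_congr fun v hv => ?_)
    have hτ := τ.2
    simp only [Sn, Finset.mem_filter] at hτ
    have hρ := ρ.2
    simp only [simplicesOf, Finset.mem_filter, link] at hρ
    exact aux_erase_eq_union_iff σ hτ.2.1 hρ.1.2.1 hv

/-- The chain group in degree `k` is one-dimensional, spanned by `σ`;
evaluation at `σ` is a linear equivalence to `ZMod 2`. -/
noncomputable def snBottomEquiv (hσ : σ ∈ X) (k : ℕ) (hk : σ.card = k + 1) :
    (↥(Sn X σ k) → ZMod 2) ≃ₗ[ZMod 2] ZMod 2 where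
  toFun f := f ⟨σ, by rw [Sn, Finset.mem_filter]; exact ⟨hσ, subset_rfl, hk⟩⟩
  map_add' _ _ := rfl
  map_smul' _ _ := rfl
  invFun c := fun _ => c
  left_inv f := by
    funext x
    have hx : (x : Finset V) = σ := Finset.mem_singleton.mp
      (by rw [← aux_Sn_self X σ hσ k hk]; exact x.2)
    exact congrArg f (Subtype.ext hx.symm)
  right_inv c := rfl

/-- Compatibility of the bottom boundary map with the augmentation of the link. -/
lemma aux_square0 (hX : IsSimplicialComplex X) (hσ : σ ∈ X) (k : ℕ) (hk : σ.card = k + 1)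
    (f : ↥(Sn X σ (k + 0 + 1)) → ZMod 2) :
    snBottomEquiv X σ hσ k hk (localBoundary X σ k f)
      = augmentation (link X σ) (linkChainEquiv X σ hX k hk 0 f) := by
  show ∑ τ : ↥(Sn X σ (k + 1)),
      (((τ.1 \ σ).filter fun v => τ.1.erase v = σ).card : ZMod 2) * f τ
    = ∑ ρ : ↥(simplicesOf (link X σ) 0), (linkChainEquiv X σ hX k hk 0 f) ρ
  refine Fintype.sum_equiv (snLinkEquiv X σ hX k hk 0) _ _ fun τ => ?_
  rw [linkChainEquiv_apply, Equiv.symm_apply_apply]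
  have hτ := τ.2
  simp only [Sn, Finset.mem_filter] at hτ
  obtain ⟨hτX, hστ, hcard⟩ := hτ
  have hfil : ((τ.1 \ σ).filter fun v => τ.1.erase v = σ) = τ.1 \ σ := by
    apply Finset.filter_true_of_mem
    intro v hv
    obtain ⟨hvτ, hvσ⟩ := Finset.mem_sdiff.mp hv
    have hσe : σ ⊆ τ.1.erase v := Finset.subset_erase.mpr ⟨hστ, hvσ⟩
    have hce : (τ.1.erase v).card = k + 1 := by
      rw [Finset.card_erase_of_mem hvτ, hcard]; omega
    exact (Finset.eq_of_subset_of_card_le hσe (by rw [hce, hk])).symm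
  have hcs : (τ.1 \ σ).card = 1 := by
    have h1 : τ.1.card = k + 1 + 1 := hcard
    have h2 : σ.card = k + 1 := hk
    rw [Finset.card_sdiff_of_subset hστ]; omega
  rw [hfil, hcs]
  simp

end AuxComb

/-- For a `k`-simplex `σ` in a finite abstract simplicial complex `X` and
any `n ≥ k + 1`, the local homology `H_n(C_•^σ)` over `ℤ/2` has the same dimension as the
reduced homology `H̃_{n-k-1}(lk(σ))` of the link of `σ` over `ℤ/2`. -/
theorem localHomologyDim_eq_reducedHomologyDim_link
    {V : Type*} [DecidableEq V] (X : Finset (Finset V)) (hX : IsSimplicialComplex X)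
    (σ : Finset V) (hσ : σ ∈ X) (k : ℕ) (hk : σ.card = k + 1) :
    ∀ n, k + 1 ≤ n →
      localHomologyDim X σ n = reducedHomologyDim (link X σ) (n - (k + 1)) := by
  intro n hn
  obtain ⟨m, rfl⟩ : ∃ m, n = k + m + 1 := ⟨n - (k + 1), by omega⟩
  have hm : k + m + 1 - (k + 1) = m := by omega
  rw [hm]
  unfold localHomologyDim reducedHomologyDim
  cases m with
  | zero =>
    exact aux_homology_dim_eq (localBoundary X σ (k + 0 + 1)) (localBoundary X σ k)
      (reducedBoundary (link X σ) 0) (augmentation (link X σ))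
      (linkChainEquiv X σ hX k hk 1) (linkChainEquiv X σ hX k hk 0)
      (snBottomEquiv X σ hσ k hk)
      (aux_square X σ hX k hk 0) (aux_square0 X σ hX hσ k hk)
  | succ m' =>
    exact aux_homology_dim_eq (localBoundary X σ (k + (m' + 1) + 1))
      (localBoundary X σ (k + m' + 1))
      (reducedBoundary (link X σ) (m' + 1)) (reducedBoundary (link X σ) m')
      (linkChainEquiv X σ hX k hk (m' + 2)) (linkChainEquiv X σ hX k hk (m' + 1))
      (linkChainEquiv X σ hX k hk m')
      (aux_square X σ hX k hk (m' + 1)) (aux_square X σ hX k hk m')
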